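/- Let F be a rigid field of level s(F) = 2, let x₁,...,x_r ∈ F* represent pairwise different square classes with ⟨x₁,...,x_r⟩ anisotropic, and let φ, ψ be quadratic forms over F with φ ⊥ ψ anisotropic such that each x_i lies in D_F(φ ⊥ ψ) but not in D_F(φ) ∪ D_F(ψ). Then ⟨−x₁,...,−x_r⟩ is a subform of φ and also a subform of ψ. -/

import Mathlib

namespace PN

variable (F : Type*) [Field F]

/-- The diagonal quadratic form with diagonal entries given by a list. -/
noncomputable def qf (l : List F) : QuadraticForm F (Fin l.length → F) :=
  QuadraticMap.weightedSumSquares F l.get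

/-- Isometry of diagonal quadratic forms. -/
def Isom (l l' : List F) : Prop :=
  Nonempty (QuadraticMap.IsometryEquiv (qf F l) (qf F l'))

/-- Diagonalization of the sum of `k` hyperbolic planes. -/
def hypList (k : ℕ) : List F :=
  List.replicate k (1 : F) ++ List.replicate k (-1 : F)

/-- A (diagonalized) form is hyperbolic if it is isometric to a sum of hyperbolic planes. -/
def IsHyp (l : List F) : Prop := ∃ k : ℕ, Isom F l (hypList F k)

def negList (l : List F) : List F := l.map (fun x => -x)

/-- Witt equivalence of diagonalized quadratic forms. -/
def WittEquiv (l l' : List F) : Prop := IsHyp F (l ++ negList F l')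

/-- Nondegeneracy: all diagonal entries are nonzero. -/
def Nondeg (l : List F) : Prop := ∀ x ∈ l, x ≠ 0

/-- Diagonalization of the Pfister form `⟪a₁,…,aₙ⟫ = ⟨1,-a₁⟩⊗⋯⊗⟨1,-aₙ⟩`. -/
def pfister : List F → List F
  | [] => [1]
  | a :: l => pfister l ++ (pfister l).map (fun x => -a * x)

/-- `l` is a diagonalization of an `n`-fold Pfister form. -/
def IsPfister (n : ℕ) (l : List F) : Prop :=
  ∃ a : Fin n → F, (∀ i, a i ≠ 0) ∧ l = pfister F (List.ofFn a)

/-- `l` is a diagonalization of a form similar to an `n`-fold Pfister form. -/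
def IsGP (n : ℕ) (l : List F) : Prop :=
  ∃ c : F, c ≠ 0 ∧ ∃ p : List F, IsPfister F n p ∧ l = p.map (fun x => c * x)

/-- The Witt class of `l` lies in `IⁿF`, i.e. it is a sum of classes of
forms similar to `n`-fold Pfister forms. -/
def InI (n : ℕ) (l : List F) : Prop :=
  ∃ L : List (List F), (∀ p ∈ L, IsGP F n p) ∧ WittEquiv F l L.flatten

/-- The (scaled) `n`-Pfister number of `l` (`⊤` if the Witt class of `l` is not in `IⁿF`). -/
noncomputable def GPnum (n : ℕ) (l : List F) : ℕ∞ :=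
  sInf {k : ℕ∞ | ∃ L : List (List F), (L.length : ℕ∞) = k ∧
    (∀ p ∈ L, IsGP F n p) ∧ WittEquiv F l L.flatten}

/-- The unscaled `n`-Pfister number: least number of genuine `n`-fold Pfister
forms with signs `±1` whose Witt classes sum to that of `l`. -/
noncomputable def Pnum (n : ℕ) (l : List F) : ℕ∞ :=
  sInf {k : ℕ∞ | ∃ L : List (List F), (L.length : ℕ∞) = k ∧
    (∀ p ∈ L, IsPfister F n p ∨ ∃ q : List F, IsPfister F n q ∧ p = negList F q) ∧
    WittEquiv F l L.flatten}

/-- `GP_n(F, d)`: the supremum of `n`-Pfister numbers of forms in `IⁿF` of dimension `≤ d`. -/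
noncomputable def GPsup (n : ℕ) (d : ℕ) : ℕ∞ :=
  ⨆ l ∈ {l : List F | Nondeg F l ∧ InI F n l ∧ l.length ≤ d}, GPnum F n l

/-- `a` is a nonzero value represented by the form `l`. -/
def Represents (l : List F) (a : F) : Prop := a ≠ 0 ∧ ∃ x, qf F l x = a

/-- The set of nonzero represented values. -/
def D (l : List F) : Set F := {a | Represents F l a}

def Anisotropic (l : List F) : Prop := (qf F l).Anisotropic

def SameSquareClass (a b : F) : Prop := ∃ c : F, c ≠ 0 ∧ a = b * c ^ 2

/-- A field is rigid if every anisotropic binary form represents at most two square classes. -/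
def Rigid : Prop := ∀ x y : F, x ≠ 0 → y ≠ 0 → Anisotropic F [x, y] →
  ∃ u v : F, ∀ a : F, Represents F [x, y] a →
    SameSquareClass F a u ∨ SameSquareClass F a v

/-- The level `s(F)`: the least `n` such that `-1` is a sum of `n` squares (`⊤` if none). -/
noncomputable def level : ℕ∞ :=
  sInf {m : ℕ∞ | ∃ n : ℕ, m = (n : ℕ∞) ∧ ∃ f : Fin n → F, (-1 : F) = ∑ i, f i ^ 2}

/-- `l` is (isometric to) a subform of `l'`. -/
def Subform (l l' : List F) : Prop := ∃ r : List F, Isom F l' (l ++ r)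

variable {F}

lemma qf_apply (l : List F) (v : Fin l.length → F) :
    qf F l v = ∑ i, l.get i * v i ^ 2 := by
  simp [qf, QuadraticMap.weightedSumSquares_apply, smul_eq_mul, sq]

lemma qf_nil (v : Fin 0 → F) : qf F [] v = 0 := by
  rw [qf_apply]; exact Finset.sum_empty

lemma qf_cons (d : F) (l : List F) (v : Fin (l.length + 1) → F) :
    qf F (d :: l) v = d * v 0 ^ 2 + qf F l (v ∘ Fin.succ) := by
  rw [qf_apply, qf_apply]
  exact (Fin.sum_univ_succ (f := fun i : Fin (l.length + 1) => (d :: l).get i * v i ^ 2)).trans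
    (by simp)

lemma qf_zero (l : List F) : qf F l 0 = 0 := by simp [qf_apply]

lemma qf_smul (l : List F) (c : F) (v : Fin l.length → F) :
    qf F l (c • v) = c ^ 2 * qf F l v := by
  rw [qf_apply, qf_apply, Finset.mul_sum]
  exact Finset.sum_congr rfl fun i _ => by simp [mul_pow]; ring

def rep (l : List F) (a : F) : Prop := ∃ v, qf F l v = a

def irep (l : List F) (a : F) : Prop := ∃ v, v ≠ 0 ∧ qf F l v = a

lemma rep_nil_iff {a : F} : rep ([] : List F) a ↔ a = 0 := by
  constructor
  · rintro ⟨v, rfl⟩; exact qf_nil v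
  · rintro rfl; exact ⟨0, qf_nil 0⟩

lemma not_irep_nil (a : F) : ¬ irep ([] : List F) a := by
  rintro ⟨v, hv, -⟩
  exact hv (funext fun i => i.elim0)

lemma rep_cons_iff {d : F} {l : List F} {a : F} :
    rep (d :: l) a ↔ ∃ s b, rep l b ∧ a = d * s ^ 2 + b := by
  constructor
  · rintro ⟨v, rfl⟩
    let w : Fin (l.length + 1) → F := v
    exact ⟨w 0, qf F l (w ∘ Fin.succ), ⟨_, rfl⟩, qf_cons d l w⟩
  · rintro ⟨s, b, ⟨w, rfl⟩, rfl⟩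
    refine ⟨Fin.cons s w, ?_⟩
    rw [qf_cons]
    simp [Function.comp_def]

lemma irep_cons_iff {d : F} {l : List F} {a : F} :
    irep (d :: l) a ↔ ∃ s b, a = d * s ^ 2 + b ∧
      ((s ≠ 0 ∧ rep l b) ∨ irep l b) := by
  constructor
  · rintro ⟨v, hv, rfl⟩
    let w : Fin (l.length + 1) → F := v
    refine ⟨w 0, qf F l (w ∘ Fin.succ), qf_cons d l w, ?_⟩
    by_cases h0 : w 0 = 0
    · right
      refine ⟨w ∘ Fin.succ, ?_, rfl⟩
      intro h
      apply hv
      funext i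
      refine Fin.cases ?_ (fun j => ?_) (i : Fin (l.length + 1))
      · exact h0
      · exact congrFun h j
    · exact Or.inl ⟨h0, _, rfl⟩
  · rintro ⟨s, b, rfl, (⟨hs, w, rfl⟩ | ⟨w, hw, rfl⟩)⟩
    · refine ⟨Fin.cons s w, ?_, by rw [qf_cons]; simp [Function.comp_def]⟩
      intro h
      exact hs (by simpa using congrFun h 0)
    · refine ⟨Fin.cons s w, ?_, by rw [qf_cons]; simp [Function.comp_def]⟩
      intro h
      exact hw (funext fun j => by simpa using congrFun h j.succ)

lemma rep_of_irep {l : List F} {a : F} (h : irep l a) : rep l a := ⟨h.choose, h.choose_spec.2⟩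

lemma irep_of_rep {l : List F} {a : F} (h : rep l a) (ha : a ≠ 0) : irep l a := by
  obtain ⟨v, rfl⟩ := h
  exact ⟨v, fun h0 => ha (by rw [h0, qf_zero]), rfl⟩

lemma rep_append_iff {l l' : List F} {a : F} :
    rep (l ++ l') a ↔ ∃ b c, rep l b ∧ rep l' c ∧ a = b + c := by
  induction l generalizing a with
  | nil =>
    simp only [List.nil_append]
    constructor
    · intro h
      exact ⟨0, a, rep_nil_iff.mpr rfl, h, (zero_add a).symm⟩
    · rintro ⟨b, c, hb, hc, rfl⟩
      rw [rep_nil_iff.mp hb, zero_add]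
      exact hc
  | cons d t ih =>
    rw [List.cons_append]
    constructor
    · intro h
      obtain ⟨s, b, hb, rfl⟩ := rep_cons_iff.mp h
      obtain ⟨b1, c1, h1, h2, rfl⟩ := ih.mp hb
      exact ⟨d * s ^ 2 + b1, c1, rep_cons_iff.mpr ⟨s, b1, h1, rfl⟩, h2, by ring⟩
    · rintro ⟨b, c, hb, hc, rfl⟩
      obtain ⟨s, b1, h1, rfl⟩ := rep_cons_iff.mp hb
      exact rep_cons_iff.mpr ⟨s, b1 + c, ih.mpr ⟨b1, c, h1, hc, rfl⟩, by ring⟩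

lemma irep_append_iff {l l' : List F} {a : F} :
    irep (l ++ l') a ↔ ∃ b c, a = b + c ∧
      ((irep l b ∧ rep l' c) ∨ (rep l b ∧ irep l' c)) := by
  induction l generalizing a with
  | nil =>
    simp only [List.nil_append]
    constructor
    · intro h
      exact ⟨0, a, (zero_add a).symm, Or.inr ⟨rep_nil_iff.mpr rfl, h⟩⟩
    · rintro ⟨b, c, rfl, (⟨hb, -⟩ | ⟨hb, hc⟩)⟩
      · exact absurd hb (not_irep_nil b)
      · rw [rep_nil_iff.mp hb, zero_add]
        exact hc
  | cons d t ih =>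
    rw [List.cons_append]
    constructor
    · intro h
      obtain ⟨s, b, rfl, hcase⟩ := irep_cons_iff.mp h
      rcases hcase with ⟨hs, hb⟩ | hb
      · obtain ⟨b1, c1, h1, h2, rfl⟩ := rep_append_iff.mp hb
        exact ⟨d * s ^ 2 + b1, c1, by ring,
          Or.inl ⟨irep_cons_iff.mpr ⟨s, b1, rfl, Or.inl ⟨hs, h1⟩⟩, h2⟩⟩
      · obtain ⟨b1, c1, rfl, hc⟩ := ih.mp hb
        rcases hc with ⟨h1, h2⟩ | ⟨h1, h2⟩
        · exact ⟨d * s ^ 2 + b1, c1, by ring,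
            Or.inl ⟨irep_cons_iff.mpr ⟨s, b1, rfl, Or.inr h1⟩, h2⟩⟩
        · exact ⟨d * s ^ 2 + b1, c1, by ring,
            Or.inr ⟨rep_cons_iff.mpr ⟨s, b1, h1, rfl⟩, h2⟩⟩
    · rintro ⟨b, c, rfl, (⟨h1, h2⟩ | ⟨h1, h2⟩)⟩
      · obtain ⟨s, b1, rfl, hc⟩ := irep_cons_iff.mp h1
        rcases hc with ⟨hs, h3⟩ | h3
        · exact irep_cons_iff.mpr ⟨s, b1 + c, by ring,
            Or.inl ⟨hs, rep_append_iff.mpr ⟨b1, c, h3, h2, rfl⟩⟩⟩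
        · exact irep_cons_iff.mpr ⟨s, b1 + c, by ring,
            Or.inr (ih.mpr ⟨b1, c, rfl, Or.inl ⟨h3, h2⟩⟩)⟩
      · obtain ⟨s, b1, h3, rfl⟩ := rep_cons_iff.mp h1
        exact irep_cons_iff.mpr ⟨s, b1 + c, by ring,
          Or.inr (ih.mpr ⟨b1, c, rfl, Or.inr ⟨h3, h2⟩⟩)⟩

section Isometries

variable {l l' t t' : List F}

def Isom' (l l' : List F) : Prop := Nonempty (QuadraticMap.IsometryEquiv (qf F l) (qf F l'))

lemma isom_refl (l : List F) : Isom' l l := ⟨QuadraticMap.IsometryEquiv.refl _⟩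

lemma isom_symm (h : Isom' l l') : Isom' l' l := h.map fun e => e.symm

lemma isom_trans {l'' : List F} (h : Isom' l l') (h' : Isom' l' l'') : Isom' l l'' :=
  h.map2 (fun e e' => e.trans e') h'

lemma isom_rep (h : Isom' l l') {a : F} (ha : rep l a) : rep l' a := by
  obtain ⟨e⟩ := h
  obtain ⟨v, hv⟩ := ha
  exact ⟨e v, by rw [e.map_app, hv]⟩

lemma isom_irep (h : Isom' l l') {a : F} (ha : irep l a) : irep l' a := by
  obtain ⟨e⟩ := h
  obtain ⟨v, hv, hqv⟩ := ha
  refine ⟨e v, fun h0 => hv ?_, by rw [e.map_app, hqv]⟩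
  have := congrArg e.toLinearEquiv.symm h0
  simpa using this

-- the append linear equivalence
private lemma castcast {m n : ℕ} (h : m = n) (k : Fin n) : Fin.cast h (Fin.cast h.symm k) = k :=
  Fin.ext (by simp)

private lemma fin_append_add {m n : ℕ} (u u' : Fin m → F) (v v' : Fin n → F) (k : Fin (m + n)) :
    Fin.append (u + u') (v + v') k = Fin.append u v k + Fin.append u' v' k := by
  refine Fin.addCases (fun j => ?_) (fun j => ?_) k <;>
    simp [Fin.append_left, Fin.append_right]

private lemma fin_append_smul {m n : ℕ} (c : F) (u : Fin m → F) (v : Fin n → F)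
    (k : Fin (m + n)) :
    Fin.append (c • u) (c • v) k = c * Fin.append u v k := by
  refine Fin.addCases (fun j => ?_) (fun j => ?_) k <;>
    simp [Fin.append_left, Fin.append_right]

def appendEquiv (l l' : List F) :
    ((Fin l.length → F) × (Fin l'.length → F)) ≃ₗ[F] (Fin (l ++ l').length → F) where
  toFun p := fun i => Fin.append p.1 p.2 (Fin.cast ((List.length_append : (l ++ l').length = l.length + l'.length)) i)
  invFun w := (fun j => w (Fin.cast ((List.length_append : (l ++ l').length = l.length + l'.length)).symm (Fin.castAdd l'.length j)),
    fun j => w (Fin.cast ((List.length_append : (l ++ l').length = l.length + l'.length)).symm (Fin.natAdd l.length j)))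
  map_add' p q := by
    funext i
    exact fin_append_add _ _ _ _ _
  map_smul' c p := by
    funext i
    exact fin_append_smul _ _ _ _
  left_inv := by
    rintro ⟨u, v⟩
    refine Prod.ext (funext fun j => ?_) (funext fun j => ?_) <;>
      simp [castcast, Fin.append_left, Fin.append_right]
  right_inv := by
    intro w
    funext i
    show Fin.append _ _ (Fin.cast ((List.length_append : (l ++ l').length = l.length + l'.length)) i) = w i
    obtain ⟨k, rfl⟩ : ∃ k, i = Fin.cast ((List.length_append : (l ++ l').length = l.length + l'.length)).symm k :=
      ⟨Fin.cast ((List.length_append : (l ++ l').length = l.length + l'.length)) i, Fin.ext (by simp)⟩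
    rw [castcast]
    refine Fin.addCases (fun j => ?_) (fun j => ?_) k
    · rw [Fin.append_left]
    · rw [Fin.append_right]

private lemma get_append_left' (l l' : List F) (j : Fin l.length) :
    (l ++ l').get (Fin.cast ((List.length_append : (l ++ l').length = l.length + l'.length)).symm (Fin.castAdd l'.length j)) =
      l.get j := by
  simp [List.get_eq_getElem, List.getElem_append_left]

private lemma get_append_right' (l l' : List F) (j : Fin l'.length) :
    (l ++ l').get (Fin.cast ((List.length_append : (l ++ l').length = l.length + l'.length)).symm (Fin.natAdd l.length j)) =
      l'.get j := by
  simp [List.get_eq_getElem, List.getElem_append_right]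

lemma appendEquiv_qf (l l' : List F) (p : (Fin l.length → F) × (Fin l'.length → F)) :
    qf F (l ++ l') (appendEquiv l l' p) = qf F l p.1 + qf F l' p.2 := by
  obtain ⟨u, v⟩ := p
  rw [qf_apply, qf_apply, qf_apply]
  have h := (List.length_append : (l ++ l').length = l.length + l'.length)
  have key := Fintype.sum_equiv (finCongr h)
    (fun i : Fin ((l ++ l').length) =>
      (l ++ l').get i * (appendEquiv l l' (u, v) i) ^ 2)
    (fun k : Fin (l.length + l'.length) =>
      (l ++ l').get (Fin.cast h.symm k) * (Fin.append u v k) ^ 2)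
    (fun i => by
      have h1 : Fin.cast h.symm (finCongr h i) = i := Fin.ext (by simp)
      show (l ++ l').get i * ((appendEquiv l l') (u, v) i) ^ 2 =
        (l ++ l').get (Fin.cast h.symm (finCongr h i)) * (Fin.append u v (finCongr h i)) ^ 2
      rw [h1]
      rfl)
  rw [key, Fin.sum_univ_add]
  congr 1
  · exact Finset.sum_congr rfl fun j _ => by rw [get_append_left', Fin.append_left]
  · exact Finset.sum_congr rfl fun j _ => by rw [get_append_right', Fin.append_right]

noncomputable def appendIsometry (l l' : List F) :
    QuadraticMap.IsometryEquiv ((qf F l).prod (qf F l')) (qf F (l ++ l')) :=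
  { appendEquiv l l' with
    map_app' := fun p => appendEquiv_qf l l' p }

lemma isom_append_congr (h : Isom' l l') (h' : Isom' t t') : Isom' (l ++ t) (l' ++ t') := by
  obtain ⟨e⟩ := h
  obtain ⟨e'⟩ := h'
  exact ⟨((appendIsometry l t).symm.trans (QuadraticMap.IsometryEquiv.prod e e')).trans
    (appendIsometry l' t')⟩

lemma isom_cons_congr (d : F) (h : Isom' t t') : Isom' (d :: t) (d :: t') :=
  isom_append_congr (l := [d]) (l' := [d]) (isom_refl _) h

end Isometries


lemma qf_pair (a b : F) (v : Fin 2 → F) : qf F [a, b] v = a * v 0 ^ 2 + b * v 1 ^ 2 := by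
  rw [qf_cons, qf_cons]
  simp [Function.comp_def, Fin.succ_zero_eq_one]
  exact qf_nil _

lemma qf_single (a : F) (v : Fin 1 → F) : qf F [a] v = a * v 0 ^ 2 := by
  rw [qf_cons]
  simpa using qf_nil (v ∘ Fin.succ)

lemma rep_pair_iff {a b z : F} : rep [a, b] z ↔ ∃ s t, z = a * s ^ 2 + b * t ^ 2 := by
  constructor
  · intro h
    obtain ⟨s, b1, hb1, rfl⟩ := rep_cons_iff.mp h
    obtain ⟨t, b2, hb2, rfl⟩ := rep_cons_iff.mp hb1
    rw [rep_nil_iff.mp hb2]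
    exact ⟨s, t, by ring⟩
  · rintro ⟨s, t, rfl⟩
    exact rep_cons_iff.mpr ⟨s, b * t ^ 2,
      rep_cons_iff.mpr ⟨t, 0, rep_nil_iff.mpr rfl, by ring⟩, rfl⟩

lemma irep_pair_iff {a b z : F} :
    irep [a, b] z ↔ ∃ s t, ¬(s = 0 ∧ t = 0) ∧ z = a * s ^ 2 + b * t ^ 2 := by
  constructor
  · intro h
    obtain ⟨s, b1, rfl, hcase⟩ := irep_cons_iff.mp h
    rcases hcase with ⟨hs, hb1⟩ | hb1
    · obtain ⟨t, hb2⟩ := rep_cons_iff.mp hb1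
      obtain ⟨b2, hb3, rfl⟩ := hb2
      rw [rep_nil_iff.mp hb3]
      exact ⟨s, t, fun h => hs h.1, by ring⟩
    · obtain ⟨t, b2, rfl, hcase2⟩ := irep_cons_iff.mp hb1
      rcases hcase2 with ⟨ht, hb2⟩ | hb2
      · rw [rep_nil_iff.mp hb2]
        exact ⟨s, t, fun h => ht h.2, by ring⟩
      · exact absurd hb2 (not_irep_nil _)
  · rintro ⟨s, t, hst, rfl⟩
    rw [not_and_or] at hst
    rcases hst with hs | ht
    · exact irep_cons_iff.mpr ⟨s, b * t ^ 2, rfl,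
        Or.inl ⟨hs, rep_cons_iff.mpr ⟨t, 0, rep_nil_iff.mpr rfl, by ring⟩⟩⟩
    · exact irep_cons_iff.mpr ⟨s, b * t ^ 2, rfl, Or.inr
        (irep_cons_iff.mpr ⟨t, 0, by ring, Or.inl ⟨ht, rep_nil_iff.mpr rfl⟩⟩)⟩

lemma isom_pair_of {a b a' b' : F} (e : (Fin 2 → F) ≃ₗ[F] (Fin 2 → F))
    (h : ∀ y : Fin 2 → F, qf F [a', b'] (e y) = qf F [a, b] y) : Isom' [a, b] [a', b'] :=
  ⟨{ e with map_app' := h }⟩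

set_option maxHeartbeats 1000000 in
/-- binary isometry: if `a = d*s^2 + c ≠ 0` then `⟨d,c⟩ ≅ ⟨a, d*c*a⟩`. -/
lemma isom_pair_aux {d c s a : F} (ha : a = d * s ^ 2 + c) (ha0 : a ≠ 0) :
    Isom' [a, d * c * a] [d, c] := by
  subst ha
  have hna : -(d * s ^ 2 + c) ≠ 0 := neg_ne_zero.mpr ha0
  refine isom_pair_of
    { toFun := fun y => ![s * y 0 + c * y 1, y 0 - d * s * y 1]
      invFun := fun x => ![(-(d * s) * x 0 - c * x 1) / (-(d * s ^ 2 + c)),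
        (-(x 0) + s * x 1) / (-(d * s ^ 2 + c))]
      map_add' := by
        intro y z
        funext i
        fin_cases i <;> simp <;> ring
      map_smul' := by
        intro r y
        funext i
        fin_cases i <;> simp <;> ring
      left_inv := by
        intro y
        funext i
        fin_cases i
        · show (-(d * s) * (s * y 0 + c * y 1) - c * (y 0 - d * s * y 1)) /
              -(d * s ^ 2 + c) = y 0
          rw [div_eq_iff hna]; ring
        · show (-(s * y 0 + c * y 1) + s * (y 0 - d * s * y 1)) / -(d * s ^ 2 + c) = y 1
          rw [div_eq_iff hna]; ring
      right_inv := by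
        intro x
        funext i
        fin_cases i
        · show s * ((-(d * s) * x 0 - c * x 1) / -(d * s ^ 2 + c)) +
              c * ((-(x 0) + s * x 1) / -(d * s ^ 2 + c)) = x 0
          rw [← mul_div_assoc, ← mul_div_assoc, ← add_div, div_eq_iff hna]; ring
        · show (-(d * s) * x 0 - c * x 1) / -(d * s ^ 2 + c) -
              d * s * ((-(x 0) + s * x 1) / -(d * s ^ 2 + c)) = x 1
          rw [← mul_div_assoc, div_sub_div_same, div_eq_iff hna]; ring } ?_
  intro y
  show qf F [d, c] ![s * y 0 + c * y 1, y 0 - d * s * y 1] =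
    qf F [d * s ^ 2 + c, d * c * (d * s ^ 2 + c)] y
  rw [qf_pair, qf_pair]
  simp only [Matrix.cons_val_zero, Matrix.cons_val_one, Matrix.head_cons]
  ring

lemma isom_scale_head {d s : F} (hs : s ≠ 0) (t : List F) :
    Isom' (d :: t) ((d * s ^ 2) :: t) := by
  refine isom_append_congr (l := [d]) (l' := [d * s ^ 2]) ?_ (isom_refl t)
  refine ⟨{ LinearEquiv.smulOfNeZero F _ s⁻¹ (inv_ne_zero hs) with map_app' := ?_ }⟩
  intro v
  show qf F [d * s ^ 2] (s⁻¹ • v) = qf F [d] v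
  rw [qf_smul, qf_single, qf_single]
  field_simp

lemma split_rep : ∀ (φ : List F) {a : F}, a ≠ 0 → rep φ a → ∃ ρ, Isom' φ (a :: ρ) := by
  intro φ
  induction φ with
  | nil =>
    intro a ha h
    exact absurd (rep_nil_iff.mp h) ha
  | cons d t ih =>
    intro a ha h
    obtain ⟨s, b, hb, rfl⟩ := rep_cons_iff.mp h
    by_cases hb0 : b = 0
    · subst hb0
      have hs : s ≠ 0 := by
        rintro rfl
        simp at ha
      exact ⟨t, by rw [show d * s ^ 2 + 0 = d * s ^ 2 by ring]; exact isom_scale_head hs t⟩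
    · obtain ⟨ρ₁, h₁⟩ := ih hb0 hb
      refine ⟨d * b * (d * s ^ 2 + b) :: ρ₁, ?_⟩
      refine isom_trans (isom_cons_congr d h₁) ?_
      exact isom_symm (isom_append_congr (t := ρ₁) (t' := ρ₁)
        (isom_pair_aux rfl ha) (isom_refl ρ₁))



section Arithmetic

lemma ssc_symm {a b : F} (h : SameSquareClass F a b) : SameSquareClass F b a := by
  obtain ⟨c, hc, rfl⟩ := h
  exact ⟨c⁻¹, inv_ne_zero hc, by field_simp⟩

lemma ssc_trans {a b c : F} (h : SameSquareClass F a b) (h' : SameSquareClass F b c) :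
    SameSquareClass F a c := by
  obtain ⟨u, hu, rfl⟩ := h
  obtain ⟨v, hv, rfl⟩ := h'
  exact ⟨v * u, mul_ne_zero hv hu, by ring⟩

lemma ssc_common {a b u : F} (h : SameSquareClass F a u) (h' : SameSquareClass F b u) :
    SameSquareClass F a b := ssc_trans h (ssc_symm h')

lemma ssc_neg_neg {a b : F} (h : SameSquareClass F (-a) (-b)) : SameSquareClass F a b := by
  obtain ⟨c, hc, hcc⟩ := h
  exact ⟨c, hc, by linear_combination -hcc⟩

lemma ssc_neg_swap {a b : F} (h : SameSquareClass F a (-b)) : SameSquareClass F (-a) b := by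
  obtain ⟨c, hc, hcc⟩ := h
  exact ⟨c, hc, by linear_combination -hcc⟩

lemma ssc_neg_swap' {a b : F} (h : SameSquareClass F (-a) b) : SameSquareClass F a (-b) := by
  obtain ⟨c, hc, hcc⟩ := h
  exact ⟨c, hc, by linear_combination -hcc⟩

lemma rep_scale {l : List F} {b : F} (h : rep l b) (c : F) : rep l (b * c ^ 2) := by
  obtain ⟨v, rfl⟩ := h
  exact ⟨c • v, by rw [qf_smul]; ring⟩

lemma rep_of_ssc {l : List F} {b z : F} (h : rep l b) (h' : SameSquareClass F z b) :
    rep l z := by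
  obtain ⟨c, hc, rfl⟩ := h'
  exact rep_scale h c

lemma aniso_iff {l : List F} : Anisotropic F l ↔ ¬ irep l 0 := by
  constructor
  · rintro h ⟨v, hv, h0⟩
    exact hv (h v h0)
  · intro h v h0
    by_contra hv
    exact h ⟨v, hv, h0⟩

lemma represents_iff {l : List F} {a : F} : Represents F l a ↔ a ≠ 0 ∧ rep l a := Iff.rfl

/-- `-1` is not a square (level `= 2`). -/
lemma neg_one_not_square (hlevel : level F = 2) : ¬ ∃ c : F, (-1 : F) = c ^ 2 := by
  rintro ⟨c, hc⟩
  have h1 : (1 : ℕ∞) ∈ {m : ℕ∞ | ∃ n : ℕ, m = (n : ℕ∞) ∧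
      ∃ f : Fin n → F, (-1 : F) = ∑ i, f i ^ 2} :=
    ⟨1, by norm_num, fun _ => c, by simpa using hc⟩
  have h2 := sInf_le h1
  rw [level] at hlevel
  rw [hlevel] at h2
  exact absurd h2 (by norm_num)

/-- `-1` is a sum of two squares (level `= 2`). -/
lemma neg_one_sum_two_squares (hlevel : level F = 2) :
    ∃ e f : F, (-1 : F) = e ^ 2 + f ^ 2 := by
  set S : Set ℕ∞ := {m : ℕ∞ | ∃ n : ℕ, m = (n : ℕ∞) ∧
    ∃ f : Fin n → F, (-1 : F) = ∑ i, f i ^ 2} with hS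
  have hne : S.Nonempty := by
    by_contra h
    rw [Set.not_nonempty_iff_eq_empty] at h
    rw [level, ← hS, h, sInf_empty] at hlevel
    exact absurd hlevel (by norm_num)
  have hmem : sInf S ∈ S := csInf_mem hne
  rw [show sInf S = level F from rfl, hlevel] at hmem
  obtain ⟨n, hn, f, hf⟩ := hmem
  have hn2 : n = 2 := by exact_mod_cast hn.symm
  subst hn2
  exact ⟨f 0, f 1, by rwa [Fin.sum_univ_two] at hf⟩

lemma aniso_one_one (hns : ¬ ∃ c : F, (-1 : F) = c ^ 2) : ¬ irep [(1 : F), 1] 0 := by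
  intro h
  obtain ⟨s, t, hst, h0⟩ := irep_pair_iff.mp h
  rw [not_and_or] at hst
  by_cases ht : t = 0
  · subst ht
    rcases hst with hs | hs
    · apply hs
      have : s ^ 2 = 0 := by linear_combination -h0
      exact pow_eq_zero_iff (by norm_num) |>.mp this
    · exact hs rfl
  · refine hns ⟨s / t, ?_⟩
    field_simp
    linear_combination h0

/-- values of `⟨1,1⟩` are in the square class of `1` or `-1`. -/
lemma one_one_values (hrigid : Rigid F) (hns : ¬ ∃ c : F, (-1 : F) = c ^ 2)
    (h2sq : ∃ e f : F, (-1 : F) = e ^ 2 + f ^ 2) {w : F} (hw : w ≠ 0)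
    (hrep : rep [(1 : F), 1] w) :
    SameSquareClass F w 1 ∨ SameSquareClass F w (-1) := by
  obtain ⟨u, v, hu⟩ := hrigid 1 1 one_ne_zero one_ne_zero (aniso_iff.mpr (aniso_one_one hns))
  have hne1 : (-1 : F) ≠ 0 := by
    intro h
    exact (one_ne_zero : (1 : F) ≠ 0) (by linear_combination -h)
  have c1 := hu 1 ⟨one_ne_zero, rep_pair_iff.mpr ⟨1, 0, by ring⟩⟩
  have cm1 : SameSquareClass F (-1 : F) u ∨ SameSquareClass F (-1 : F) v := by
    obtain ⟨e, f, hef⟩ := h2sq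
    exact hu (-1) ⟨hne1, rep_pair_iff.mpr ⟨e, f, by linear_combination hef⟩⟩
  have cw := hu w ⟨hw, hrep⟩
  have hkey : ∀ z : F, ¬ (SameSquareClass F (1 : F) z ∧ SameSquareClass F (-1 : F) z) := by
    rintro z ⟨h1, h2⟩
    obtain ⟨c, hc, hcc⟩ := ssc_common h2 h1
    exact hns ⟨c, by linear_combination hcc⟩
  rcases cw with hwu | hwv
  · rcases c1 with h1 | h1
    · exact Or.inl (ssc_common hwu h1)
    · rcases cm1 with h2 | h2
      · exact Or.inr (ssc_common hwu h2)
      · exact absurd ⟨h1, h2⟩ (hkey v)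
  · rcases c1 with h1 | h1
    · rcases cm1 with h2 | h2
      · exact absurd ⟨h1, h2⟩ (hkey u)
      · exact Or.inr (ssc_common hwv h2)
    · exact Or.inl (ssc_common hwv h1)

/-- Key lemma: values of an anisotropic binary form `⟨a,b⟩` over a rigid field
of level 2 lie in the square class of `a`, of `b`, or of both `-a` and `-b`. -/
lemma pair_classes (hrigid : Rigid F) (hns : ¬ ∃ c : F, (-1 : F) = c ^ 2)
    (h2sq : ∃ e f : F, (-1 : F) = e ^ 2 + f ^ 2) {a b z : F}
    (ha : a ≠ 0) (hb : b ≠ 0) (hani : ¬ irep [a, b] 0) (hz : z ≠ 0)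
    (hrep : rep [a, b] z) :
    SameSquareClass F z a ∨ SameSquareClass F z b ∨
      (SameSquareClass F z (-a) ∧ SameSquareClass F z (-b)) := by
  obtain ⟨s, t, hzst⟩ := rep_pair_iff.mp hrep
  by_cases ht : t = 0
  · subst ht
    have hs : s ≠ 0 := by
      rintro rfl
      exact hz (by rw [hzst]; ring)
    exact Or.inl ⟨s, hs, by rw [hzst]; ring⟩
  by_cases hs : s = 0
  · subst hs
    exact Or.inr (Or.inl ⟨t, ht, by rw [hzst]; ring⟩)
  obtain ⟨u, v, hu⟩ := hrigid a b ha hb (aniso_iff.mpr hani)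
  have ca := hu a ⟨ha, rep_pair_iff.mpr ⟨1, 0, by ring⟩⟩
  have cb := hu b ⟨hb, rep_pair_iff.mpr ⟨0, 1, by ring⟩⟩
  have cz := hu z ⟨hz, hrep⟩
  have core : ∀ u' v' : F, SameSquareClass F z u' →
      (SameSquareClass F a u' ∨ SameSquareClass F a v') →
      (SameSquareClass F b u' ∨ SameSquareClass F b v') →
      SameSquareClass F z a ∨ SameSquareClass F z b ∨
        (SameSquareClass F z (-a) ∧ SameSquareClass F z (-b)) := by
    intro u' v' hzu hav hbv
    rcases hav with h | h
    · exact Or.inl (ssc_common hzu h)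
    rcases hbv with h' | h'
    · exact Or.inr (Or.inl (ssc_common hzu h'))
    have hba : SameSquareClass F b a := ssc_common h' h
    obtain ⟨c, hc, hbc⟩ := hba
    have hw : z = a * (s ^ 2 + (c * t) ^ 2) := by rw [hzst, hbc]; ring
    have hw0 : s ^ 2 + (c * t) ^ 2 ≠ 0 := by
      intro h0
      exact hz (by rw [hw, h0, mul_zero])
    have hwrep : rep [(1 : F), 1] (s ^ 2 + (c * t) ^ 2) :=
      rep_pair_iff.mpr ⟨s, c * t, by ring⟩
    rcases one_one_values hrigid hns h2sq hw0 hwrep with ⟨e, he, h1⟩ | ⟨e, he, h1⟩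
    · exact Or.inl ⟨e, he, by rw [hw, h1]; ring⟩
    · refine Or.inr (Or.inr ⟨⟨e, he, by rw [hw, h1]; ring⟩, ⟨e / c, div_ne_zero he hc, ?_⟩⟩)
      rw [hw, h1, hbc]
      field_simp
  rcases cz with hz' | hz'
  · exact core u v hz' ca cb
  · exact core v u hz' ca.symm cb.symm

lemma irep_ofFn {r : ℕ} (x : Fin r → F) (v : Fin r → F) (hv : v ≠ 0)
    (h0 : ∑ k, x k * v k ^ 2 = 0) : irep (List.ofFn x) 0 := by
  have h : (List.ofFn x).length = r := List.length_ofFn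
  refine ⟨fun i => v (finCongr h i), ?_, ?_⟩
  · intro hw
    apply hv
    funext k
    have := congrFun hw (finCongr h.symm k)
    simpa using this
  · rw [qf_apply]
    refine Eq.trans (Fintype.sum_equiv (finCongr h)
      (fun i => (List.ofFn x).get i * (v (finCongr h i)) ^ 2)
      (fun k => x k * v k ^ 2) (fun i => ?_)) h0
    show (List.ofFn x).get i * v (finCongr h i) ^ 2 =
      x (finCongr h i) * v (finCongr h i) ^ 2
    rw [List.get_ofFn]
    rfl

end Arithmetic


section Main

/-- Main induction: if an anisotropic form represents `-x i` for values in pairwise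
distinct square classes (also distinct from the classes of `-x j`), then
`⟨-x 1, …, -x r⟩` splits off. -/
lemma subform_lemma
    (hA : ∀ {a b z : F}, a ≠ 0 → b ≠ 0 → ¬ irep [a, b] 0 → z ≠ 0 → rep [a, b] z →
      SameSquareClass F z a ∨ SameSquareClass F z b ∨
        (SameSquareClass F z (-a) ∧ SameSquareClass F z (-b))) :
    ∀ (r : ℕ) (x : Fin r → F) (φ : List F), (∀ i, x i ≠ 0) →
      (∀ i j, i ≠ j → ¬ SameSquareClass F (x i) (x j)) →
      (∀ i j, ¬ SameSquareClass F (x i) (-(x j))) →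
      ¬ irep φ 0 → (∀ i, rep φ (-(x i))) →
      ∃ ρ, Isom' φ (List.ofFn (fun i => -x i) ++ ρ) := by
  intro r
  induction r with
  | zero =>
    intro x φ _ _ _ _ _
    refine ⟨φ, ?_⟩
    rw [List.ofFn_zero, List.nil_append]
    exact isom_refl φ
  | succ r ih =>
    intro x φ hx hdiff hmix hani hrep
    have ha0 : (-(x 0)) ≠ 0 := neg_ne_zero.mpr (hx 0)
    obtain ⟨ρ, hisom⟩ := split_rep φ ha0 (hrep 0)
    have hanicons : ¬ irep ((-(x 0)) :: ρ) 0 := fun h => hani (isom_irep (isom_symm hisom) h)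
    have haniρ : ¬ irep ρ 0 := by
      rintro ⟨w, hw, h0⟩
      exact hanicons (irep_cons_iff.mpr ⟨0, 0, by ring, Or.inr ⟨w, hw, h0⟩⟩)
    have key : ∀ i : Fin r, rep ρ (-(x i.succ)) := by
      intro i
      have hz : (-(x i.succ)) ≠ 0 := neg_ne_zero.mpr (hx i.succ)
      have hz' : rep ((-(x 0)) :: ρ) (-(x i.succ)) := isom_rep hisom (hrep i.succ)
      obtain ⟨s, b, hb, hzeq⟩ := rep_cons_iff.mp hz'
      by_cases hb0 : b = 0
      · exfalso
        have hs : s ≠ 0 := by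
          rintro rfl
          exact hz (by rw [hzeq, hb0]; ring)
        have : SameSquareClass F (-(x i.succ)) (-(x 0)) :=
          ⟨s, hs, by rw [hzeq, hb0]; ring⟩
        exact hdiff i.succ 0 (Fin.succ_ne_zero i) (ssc_neg_neg this)
      · have hpani : ¬ irep [-(x 0), b] 0 := by
          intro hir
          obtain ⟨s', t', hst, h0⟩ := irep_pair_iff.mp hir
          rw [not_and_or] at hst
          obtain ⟨w, hw⟩ := hb
          have hw0 : w ≠ 0 := by
            rintro rfl
            exact hb0 (by rw [← hw, qf_zero])
          apply hanicons
          by_cases hs' : s' = 0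
          · have ht' : t' ≠ 0 := by
              rcases hst with h | h
              · exact absurd hs' h
              · exact h
            refine irep_cons_iff.mpr ⟨s', b * t' ^ 2, by linear_combination h0, Or.inr ?_⟩
            exact ⟨t' • w, smul_ne_zero ht' hw0, by rw [qf_smul, hw]; ring⟩
          · exact irep_cons_iff.mpr ⟨s', b * t' ^ 2, by linear_combination h0,
              Or.inl ⟨hs', rep_scale ⟨w, hw⟩ t'⟩⟩
        have hzrep : rep [-(x 0), b] (-(x i.succ)) :=
          rep_pair_iff.mpr ⟨s, 1, by rw [hzeq]; ring⟩
        rcases hA ha0 hb0 hpani hz hzrep with h | h | ⟨h, -⟩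
        · exact absurd (ssc_neg_neg h) (hdiff i.succ 0 (Fin.succ_ne_zero i))
        · exact rep_of_ssc hb h
        · exfalso
          rw [neg_neg] at h
          exact hmix i.succ 0 (ssc_neg_swap' (a := x i.succ) h)
    obtain ⟨ρ', hρ'⟩ := ih (fun i => x i.succ) ρ (fun i => hx i.succ)
      (fun i j hij => hdiff i.succ j.succ (fun h => hij (Fin.succ_injective _ h)))
      (fun i j => hmix i.succ j.succ) haniρ key
    refine ⟨ρ', ?_⟩
    have : Isom' ((-(x 0)) :: ρ) ((-(x 0)) :: (List.ofFn (fun i => -(x i.succ)) ++ ρ')) :=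
      isom_cons_congr _ hρ'
    have hfinal := isom_trans hisom this
    have heq : List.ofFn (fun i : Fin (r + 1) => -x i) ++ ρ' =
        (-(x 0)) :: (List.ofFn (fun i : Fin r => -(x i.succ)) ++ ρ') := by
      rw [List.ofFn_succ]
      rfl
    rw [heq]
    exact hfinal

end Main

end PN

theorem stmt_15 (F : Type*) [Field F] (hF : (2 : F) ≠ 0)
    (hrigid : PN.Rigid F) (hlevel : PN.level F = 2)
    (r : ℕ) (x : Fin r → F) (hx : ∀ i, x i ≠ 0)
    (hdiff : ∀ i j, i ≠ j → ¬ PN.SameSquareClass F (x i) (x j))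
    (hxan : PN.Anisotropic F (List.ofFn x))
    (φ ψ : List F) (hn₁ : PN.Nondeg F φ) (hn₂ : PN.Nondeg F ψ)
    (han : PN.Anisotropic F (φ ++ ψ))
    (hrep : ∀ i, PN.Represents F (φ ++ ψ) (x i) ∧
      ¬ PN.Represents F φ (x i) ∧ ¬ PN.Represents F ψ (x i)) :
    PN.Subform F (List.ofFn (fun i => -x i)) φ ∧
      PN.Subform F (List.ofFn (fun i => -x i)) ψ := by
  classical
  have hns : ¬ ∃ c : F, (-1 : F) = c ^ 2 := PN.neg_one_not_square hlevel
  have h2sq : ∃ e f : F, (-1 : F) = e ^ 2 + f ^ 2 := PN.neg_one_sum_two_squares hlevel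
  have hA : ∀ {a b z : F}, a ≠ 0 → b ≠ 0 → ¬ PN.irep [a, b] 0 → z ≠ 0 → PN.rep [a, b] z →
      PN.SameSquareClass F z a ∨ PN.SameSquareClass F z b ∨
        (PN.SameSquareClass F z (-a) ∧ PN.SameSquareClass F z (-b)) :=
    fun ha hb hani hz hr => PN.pair_classes hrigid hns h2sq ha hb hani hz hr
  -- the square class of `x i` differs from that of `-(x j)`
  have hmix : ∀ i j, ¬ PN.SameSquareClass F (x i) (-(x j)) := by
    rintro i j ⟨c, hc, hxc⟩
    by_cases hij : i = j
    · subst hij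
      have h1 : (1 : F) = -(c ^ 2) := mul_left_cancel₀ (hx i) (by linear_combination hxc)
      exact hns ⟨c, by linear_combination -h1⟩
    · apply PN.aniso_iff.mp hxan
      refine PN.irep_ofFn x (fun k => if k = i then 1 else if k = j then c else 0) ?_ ?_
      · intro h
        have := congrFun h i
        simp at this
      · have hsplit : ∀ k, x k * (if k = i then (1 : F) else if k = j then c else 0) ^ 2 =
            (if k = i then x i else 0) + (if k = j then x j * c ^ 2 else 0) := by
          intro k
          by_cases h1 : k = i
          · subst h1
            simp [hij]
          · by_cases h2 : k = j
            · subst h2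
              simp [h1]
            · simp [h1, h2]
        rw [Finset.sum_congr rfl (fun k _ => hsplit k), Finset.sum_add_distrib]
        simp only [Finset.sum_ite_eq', Finset.mem_univ, if_true]
        linear_combination hxc
  have haniφψ : ¬ PN.irep (φ ++ ψ) 0 := PN.aniso_iff.mp han
  have haniφ : ¬ PN.irep φ 0 := by
    rintro ⟨w, hw, h0⟩
    exact haniφψ (PN.irep_append_iff.mpr ⟨0, 0, by ring,
      Or.inl ⟨⟨w, hw, h0⟩, ⟨0, PN.qf_zero ψ⟩⟩⟩)
  have haniψ : ¬ PN.irep ψ 0 := by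
    rintro ⟨w, hw, h0⟩
    exact haniφψ (PN.irep_append_iff.mpr ⟨0, 0, by ring,
      Or.inr ⟨⟨0, PN.qf_zero φ⟩, ⟨w, hw, h0⟩⟩⟩)
  -- each `-x i` is represented by both φ and ψ
  have main : ∀ i, PN.rep φ (-(x i)) ∧ PN.rep ψ (-(x i)) := by
    intro i
    obtain ⟨hxirep, hnphi, hnpsi⟩ := hrep i
    obtain ⟨aa, bb, hra, hrb, hsum⟩ := PN.rep_append_iff.mp hxirep.2
    have ha0 : aa ≠ 0 := by
      rintro rfl
      exact hnpsi ⟨hx i, by rw [hsum, zero_add]; exact hrb⟩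
    have hb0 : bb ≠ 0 := by
      rintro rfl
      exact hnphi ⟨hx i, by rw [hsum, add_zero]; exact hra⟩
    have hpani : ¬ PN.irep [aa, bb] 0 := by
      intro hir
      obtain ⟨s, t, hst, h0⟩ := PN.irep_pair_iff.mp hir
      rw [not_and_or] at hst
      obtain ⟨u, hu⟩ := id hra
      obtain ⟨w, hw⟩ := id hrb
      have hu0 : u ≠ 0 := by
        rintro rfl
        exact ha0 (by rw [← hu, PN.qf_zero])
      have hw0 : w ≠ 0 := by
        rintro rfl
        exact hb0 (by rw [← hw, PN.qf_zero])
      apply haniφψ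
      by_cases hs : s = 0
      · have ht : t ≠ 0 := by
          rcases hst with h | h
          · exact absurd hs h
          · exact h
        exact PN.irep_append_iff.mpr ⟨aa * s ^ 2, bb * t ^ 2, by linear_combination h0,
          Or.inr ⟨PN.rep_scale hra s, ⟨t • w, smul_ne_zero ht hw0, by rw [PN.qf_smul, hw]; ring⟩⟩⟩
      · exact PN.irep_append_iff.mpr ⟨aa * s ^ 2, bb * t ^ 2, by linear_combination h0,
          Or.inl ⟨⟨s • u, smul_ne_zero hs hu0, by rw [PN.qf_smul, hu]; ring⟩,
            PN.rep_scale hrb t⟩⟩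
    have hzrep : PN.rep [aa, bb] (x i) := PN.rep_pair_iff.mpr ⟨1, 1, by rw [hsum]; ring⟩
    rcases hA ha0 hb0 hpani (hx i) hzrep with h | h | ⟨h1, h2⟩
    · exact absurd ⟨hx i, PN.rep_of_ssc hra h⟩ hnphi
    · exact absurd ⟨hx i, PN.rep_of_ssc hrb h⟩ hnpsi
    · exact ⟨PN.rep_of_ssc hra (PN.ssc_neg_swap h1), PN.rep_of_ssc hrb (PN.ssc_neg_swap h2)⟩
  obtain ⟨ρ₁, hρ₁⟩ := PN.subform_lemma (fun {a b z} => hA (a := a) (b := b) (z := z)) r x φ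
    hx hdiff hmix haniφ (fun i => (main i).1)
  obtain ⟨ρ₂, hρ₂⟩ := PN.subform_lemma (fun {a b z} => hA (a := a) (b := b) (z := z)) r x ψ
    hx hdiff hmix haniψ (fun i => (main i).2)
  exact ⟨⟨ρ₁, hρ₁⟩, ⟨ρ₂, hρ₂⟩⟩
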